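/- arXiv:0812.4663 — 3 statements merged into one kernel-verified Lean document; each statement's English description precedes it below -/
import Mathlib

section
/- For every continuously differentiable function f with compact support on [0,∞) and every R > 0, the inequality ∫_R^∞ |f'(t)|² dt ≥ ∫_R^∞ f(t)²/(4t²) dt − f(R)²/(2R) holds. -/
open MeasureTheory Set

lemma hardy_aux_ioi_eq (g : ℝ → ℝ) (R M : ℝ) (hRM : R ≤ M)
    (hg : IntegrableOn g (Ioc R M)) (h0 : ∀ t, M < t → g t = 0) :
    ∫ t in Ioi R, g t = ∫ t in R..M, g t := by
  rw [intervalIntegral.integral_of_le hRM, ← Ioc_union_Ioi_eq_Ioi hRM,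
    setIntegral_union (Ioc_disjoint_Ioi le_rfl) measurableSet_Ioi hg
      ((integrableOn_congr_fun (fun t ht => h0 t ht) measurableSet_Ioi).mpr
        (integrableOn_zero))]
  have hz : ∫ t in Ioi M, g t = 0 :=
    setIntegral_eq_zero_of_forall_eq_zero (fun t ht => h0 t ht)
  rw [hz, add_zero]

/-- Hardy's inequality with boundary term on the half-line:
for `f ∈ C_c^1([0,∞))` and `R > 0`,
`∫_R^∞ |f'|² dt ≥ ∫_R^∞ f²/(4t²) dt − f(R)²/(2R)`. -/
theorem hardy_inequality_boundary (f : ℝ → ℝ) (hf : ContDiff ℝ 1 f)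
    (hsupp : HasCompactSupport f) (R : ℝ) (hR : 0 < R) :
    (∫ t in Ioi R, (deriv f t) ^ 2) ≥
      (∫ t in Ioi R, (f t) ^ 2 / (4 * t ^ 2)) - (f R) ^ 2 / (2 * R) := by
  have hc : Continuous f := hf.continuous
  have hc' : Continuous (deriv f) := hf.continuous_deriv le_rfl
  have hd : ∀ x, HasDerivAt f (deriv f x) x := fun x =>
    ((hf.differentiable one_ne_zero) x).hasDerivAt
  obtain ⟨M₀, hM₀pos, hM₀⟩ := hsupp.exists_pos_le_norm
  obtain ⟨M₁, hM₁pos, hM₁⟩ := hsupp.deriv.exists_pos_le_norm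
  set M : ℝ := max (max M₀ M₁) R with hMdef
  have hRM : R ≤ M := le_max_right _ _
  have hMpos : 0 < M := lt_of_lt_of_le hR hRM
  have hfM : ∀ t, M ≤ t → f t = 0 := by
    intro t ht
    apply hM₀ t
    rw [Real.norm_eq_abs, abs_of_pos (lt_of_lt_of_le hMpos ht)]
    exact le_trans (le_trans (le_max_left _ _) (le_max_left _ _)) ht
  have hfM' : ∀ t, M ≤ t → deriv f t = 0 := by
    intro t ht
    apply hM₁ t
    rw [Real.norm_eq_abs, abs_of_pos (lt_of_lt_of_le hMpos ht)]
    exact le_trans (le_trans (le_max_right _ _) (le_max_left _ _)) ht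
  -- positivity on [R, M]
  have hpos : ∀ t ∈ Icc R M, (0:ℝ) < t := fun t ht => lt_of_lt_of_le hR ht.1
  -- continuity of integrands on Icc R M
  have hcont1 : ContinuousOn (fun t => (deriv f t) ^ 2) (Icc R M) :=
    (hc'.pow 2).continuousOn
  have hcont2 : ContinuousOn (fun t => (f t) ^ 2 / (4 * t ^ 2)) (Icc R M) := by
    apply ContinuousOn.div ((hc.pow 2).continuousOn)
      (by fun_prop)
    intro t ht
    have := hpos t ht
    positivity
  have hcontg : ContinuousOn
      (fun t => f t * deriv f t / t - f t ^ 2 / (2 * t ^ 2)) (Icc R M) := by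
    apply ContinuousOn.sub
    · exact ContinuousOn.div ((hc.mul hc').continuousOn) continuousOn_id
        (fun t ht => (hpos t ht).ne')
    · apply ContinuousOn.div ((hc.pow 2).continuousOn) (by fun_prop)
      intro t ht
      have := hpos t ht
      positivity
  have hcontsq : ContinuousOn
      (fun t => (deriv f t - f t / (2 * t)) ^ 2) (Icc R M) := by
    apply ContinuousOn.pow
    apply ContinuousOn.sub hc'.continuousOn
    apply ContinuousOn.div hc.continuousOn (by fun_prop)
    intro t ht
    have := hpos t ht
    positivity
  -- FTC for h(t) = f t ^ 2 / (2 t)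
  have hftc : (∫ t in R..M, (f t * deriv f t / t - f t ^ 2 / (2 * t ^ 2)))
      = - (f R ^ 2 / (2 * R)) := by
    have := intervalIntegral.integral_eq_sub_of_hasDerivAt
      (f := fun t => f t ^ 2 / (2 * t))
      (f' := fun t => f t * deriv f t / t - f t ^ 2 / (2 * t ^ 2))
      (a := R) (b := M) ?_ (hcontg.mono (by rw [uIcc_of_le hRM])
        |>.intervalIntegrable)
    · rw [this]
      simp only [hfM M le_rfl]
      ring
    · intro t ht
      rw [uIcc_of_le hRM] at ht
      have htpos : (0:ℝ) < t := hpos t ht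
      have h1 : HasDerivAt (fun t => f t ^ 2) (2 * f t * deriv f t) t := by
        have := (hd t).fun_pow 2
        simpa [mul_comm, mul_assoc, mul_left_comm] using this
      have h2 : HasDerivAt (fun t : ℝ => 2 * t) 2 t := by
        simpa using (hasDerivAt_id t).const_mul 2
      have h3 := h1.fun_div h2 (by positivity)
      convert h3 using 1
      · rfl
      field_simp
  -- convert Ioi integrals to interval integrals
  have hI1 : (∫ t in Ioi R, (deriv f t) ^ 2) = ∫ t in R..M, (deriv f t) ^ 2 := by
    apply hardy_aux_ioi_eq _ _ _ hRM
    · exact (hcont1.integrableOn_Icc).mono_set Ioc_subset_Icc_self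
    · intro t ht
      rw [hfM' t ht.le]; ring
  have hI2 : (∫ t in Ioi R, (f t) ^ 2 / (4 * t ^ 2))
      = ∫ t in R..M, (f t) ^ 2 / (4 * t ^ 2) := by
    apply hardy_aux_ioi_eq _ _ _ hRM
    · exact (hcont2.integrableOn_Icc).mono_set Ioc_subset_Icc_self
    · intro t ht
      rw [hfM t ht.le]; ring
  -- the key nonnegativity
  have hsq : (0:ℝ) ≤ ∫ t in R..M, (deriv f t - f t / (2 * t)) ^ 2 :=
    intervalIntegral.integral_nonneg hRM (fun t _ => sq_nonneg _)
  -- expand the square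
  have hexp : (∫ t in R..M, (deriv f t - f t / (2 * t)) ^ 2)
      = (∫ t in R..M, (deriv f t) ^ 2)
        - (∫ t in R..M, (f t * deriv f t / t - f t ^ 2 / (2 * t ^ 2)))
        - (∫ t in R..M, (f t) ^ 2 / (4 * t ^ 2)) := by
    rw [← intervalIntegral.integral_sub, ← intervalIntegral.integral_sub]
    · apply intervalIntegral.integral_congr
      intro t ht
      rw [uIcc_of_le hRM] at ht
      have htpos : (0:ℝ) < t := hpos t ht
      field_simp
      ring
    · apply IntervalIntegrable.sub
      · exact (hcont1.mono (by rw [uIcc_of_le hRM])).intervalIntegrable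
      · exact (hcontg.mono (by rw [uIcc_of_le hRM])).intervalIntegrable
    · exact (hcont2.mono (by rw [uIcc_of_le hRM])).intervalIntegrable
    · exact (hcont1.mono (by rw [uIcc_of_le hRM])).intervalIntegrable
    · exact (hcontg.mono (by rw [uIcc_of_le hRM])).intervalIntegrable
  rw [ge_iff_le, hI1, hI2]
  rw [hexp, hftc] at hsq
  linarith
end

section
/- With χ and φ as above (φ(t) = χ(t)t^{1/2}), and V continuous on (0,∞) satisfying V(t) ≤ −(1+δ)/(4t²) for t ≥ R̃ with δ > 0, and R ≥ R̃: ∫_0^∞ (|φ'|² + Vφ²) dt ≤ 3 − (δ/4)·log(k/2). In particular, if k > 2·exp(12/δ) then ∫_0^∞ (|φ'|² + Vφ²) dt < 0. -/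
open MeasureTheory Set

/-- The piecewise linear cutoff `χ`: `0` on `[0,R]`, `(t−R)/R` on `[R,2R]`,
`1` on `[2R,kR]`, `−(t−2kR)/(kR)` on `[kR,2kR]`, and `0` beyond. -/
noncomputable def cutoff (R k t : ℝ) : ℝ :=
  if t ≤ R then 0
  else if t ≤ 2 * R then (t - R) / R
  else if t ≤ k * R then 1
  else if t ≤ 2 * k * R then -(t - 2 * k * R) / (k * R)
  else 0

/-- The test function `φ(t) = χ(t)·t^{1/2}`. -/
noncomputable def testFn (R k t : ℝ) : ℝ := cutoff R k t * Real.sqrt t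

noncomputable def chiD (R k t : ℝ) : ℝ :=
  if t ≤ R then 0
  else if t ≤ 2 * R then 1 / R
  else if t ≤ k * R then 0
  else if t ≤ 2 * k * R then -(1 / (k * R))
  else 0
noncomputable def gfun (R k t : ℝ) : ℝ :=
  chiD R k t * Real.sqrt t + cutoff R k t / (2 * Real.sqrt t)
noncomputable def F2 (δ R k t : ℝ) : ℝ :=
  chiD R k t ^ 2 * t + cutoff R k t * chiD R k t
    - (Ioo (2*R) (k*R)).indicator (fun s => δ / (4 * s)) t


lemma cutoff_abs_le_one {R k : ℝ} (hR : 0 < R) (hk : 2 < k) (t : ℝ) :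
    |cutoff R k t| ≤ 1 := by
  have hkR : 0 < k * R := by nlinarith
  rw [cutoff]
  split_ifs with i1 i2 i3 i4 <;> rw [abs_le] <;> constructor <;>
    [skip; skip; skip; skip; skip; skip; skip; skip; skip; skip]
  · norm_num
  · norm_num
  · rw [le_div_iff₀ hR]; push_neg at i1; linarith
  · rw [div_le_one hR]; linarith
  · norm_num
  · norm_num
  · rw [le_div_iff₀ hkR]; push_neg at i3; linarith
  · rw [div_le_one hkR]; push_neg at i3; linarith
  · norm_num
  · norm_num

lemma chiD_abs_le {R k : ℝ} (hR : 0 < R) (hk : 2 < k) (t : ℝ) :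
    |chiD R k t| ≤ 1 / R := by
  have hkR : 0 < k * R := by nlinarith
  have h1R : 0 < 1 / R := by positivity
  rw [chiD]
  split_ifs
  · rw [abs_zero]; positivity
  · rw [abs_of_nonneg h1R.le]
  · rw [abs_zero]; positivity
  · rw [abs_neg, abs_of_nonneg (le_of_lt (by positivity : (0:ℝ) < 1/(k*R)))]
    rw [div_le_div_iff₀ hkR hR]; nlinarith
  · rw [abs_zero]; positivity

lemma cutoff_chiD_zero {R k : ℝ} (hR : 0 < R) (hk : 2 < k) {t : ℝ}
    (h : t ∉ Icc R (2*k*R)) : cutoff R k t = 0 ∧ chiD R k t = 0 := by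
  rw [mem_Icc, not_and_or, not_le, not_le] at h
  rcases h with h | h
  · constructor <;> simp [cutoff, chiD, h.le]
  · have h1 : ¬ t ≤ R := by push_neg; nlinarith
    have h2 : ¬ t ≤ 2*R := by push_neg; nlinarith
    have h3 : ¬ t ≤ k*R := by push_neg; nlinarith
    have h4 : ¬ t ≤ 2*k*R := not_le.2 h
    constructor <;> simp [cutoff, chiD, h1, h2, h3, h4]

lemma gfun_sq (R k : ℝ) {t : ℝ} (ht : 0 < t) :
    gfun R k t ^ 2 =
      chiD R k t ^ 2 * t + cutoff R k t * chiD R k t + cutoff R k t ^ 2 / (4 * t) := by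
  have h0 : Real.sqrt t ≠ 0 := by simpa [Real.sqrt_ne_zero'] using ht
  have h1 : Real.sqrt t * Real.sqrt t = t := Real.mul_self_sqrt ht.le
  have h2 : Real.sqrt t ^ 2 = t := Real.sq_sqrt ht.le
  rw [gfun, ← h1]
  field_simp
  simp only [h2]; ring

lemma pointwise_bound (δ Rt R k : ℝ) (hδ : 0 < δ) (hRt : 0 < Rt) (hRRt : Rt ≤ R) (hk : 2 < k)
    (V : ℝ → ℝ) (hVle : ∀ t, Rt ≤ t → V t ≤ -(1 + δ) / (4 * t ^ 2))
    {t : ℝ} (ht : 0 < t) :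
    gfun R k t ^ 2 + V t * (testFn R k t) ^ 2 ≤ F2 δ R k t := by
  have hR : 0 < R := lt_of_lt_of_le hRt hRRt
  have hφ2 : testFn R k t ^ 2 = cutoff R k t ^ 2 * t := by
    rw [testFn, mul_pow, Real.sq_sqrt ht.le]
  rw [gfun_sq R k ht, hφ2, F2]
  rcases lt_or_ge t Rt with hc | hc
  · have hcz : cutoff R k t = 0 := by rw [cutoff, if_pos (by linarith)]
    have hind : (Ioo (2*R) (k*R)).indicator (fun s => δ/(4*s)) t = 0 :=
      Set.indicator_of_notMem (by rw [mem_Ioo]; push_neg; intro h; linarith) _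
    rw [hcz, hind]; simp
  · have hVt := hVle t hc
    have hb2 : (0:ℝ) ≤ cutoff R k t ^ 2 * t := by positivity
    have hmul : V t * (cutoff R k t ^ 2 * t) ≤ (-(1+δ)/(4*t^2)) * (cutoff R k t ^ 2 * t) :=
      mul_le_mul_of_nonneg_right hVt hb2
    have heq : (-(1+δ)/(4*t^2)) * (cutoff R k t ^ 2 * t)
        = -((1+δ) * cutoff R k t ^ 2 / (4*t)) := by
      field_simp
    by_cases hmem : t ∈ Ioo (2*R) (k*R)
    · have h1' : ¬ t ≤ R := by push_neg; linarith [hmem.1]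
      have h2' : ¬ t ≤ 2*R := not_le.2 hmem.1
      have hc1 : cutoff R k t = 1 := by
        rw [cutoff, if_neg h1', if_neg h2', if_pos hmem.2.le]
      rw [Set.indicator_of_mem hmem, hc1]
      rw [hc1] at hmul
      have hmul2 : V t * ((1:ℝ)^2*t) ≤ -((1+δ)/(4*t)) := by
        calc V t * ((1:ℝ)^2*t) ≤ -(1+δ)/(4*t^2) * ((1:ℝ)^2*t) := hmul
          _ = -((1+δ)/(4*t)) := by field_simp
      have e2 : (1:ℝ)^2/(4*t) - (1+δ)/(4*t) = -(δ/(4*t)) := by field_simp; ring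
      linarith
    · rw [Set.indicator_of_notMem hmem]
      have hmul2 : V t * (cutoff R k t^2*t) ≤ -((1+δ) * cutoff R k t^2/(4*t)) :=
        le_of_le_of_eq hmul heq
      have e : cutoff R k t^2/(4*t) - (1+δ)*cutoff R k t^2/(4*t)
          = -(δ * cutoff R k t^2/(4*t)) := by field_simp; ring
      have hnn : (0:ℝ) ≤ δ * cutoff R k t^2/(4*t) := by positivity
      linarith

lemma hasDeriv_testFn (R k : ℝ) (hR : 0 < R) (hk : 2 < k) {t : ℝ} (ht : 0 < t)
    (h1 : t ≠ R) (h2 : t ≠ 2*R) (h3 : t ≠ k*R) (h4 : t ≠ 2*k*R) :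
    HasDerivAt (testFn R k) (gfun R k t) t := by
  have hkR : 0 < k * R := by nlinarith
  have h2RkR : 2*R < k*R := by nlinarith
  have hsne : Real.sqrt t ≠ 0 := by
    simpa [Real.sqrt_ne_zero'] using ht
  rcases lt_or_gt_of_ne h1 with c1 | c1
  · -- t < R : locally zero
    have hev : testFn R k =ᶠ[nhds t] (fun _ => (0:ℝ)) := by
      filter_upwards [Iio_mem_nhds c1] with s hs
      simp [testFn, cutoff, le_of_lt (mem_Iio.1 hs)]
    have : HasDerivAt (testFn R k) 0 t :=
      (hasDerivAt_const t (0:ℝ)).congr_of_eventuallyEq hev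
    convert this using 1
    simp [gfun, chiD, cutoff, le_of_lt c1]
  · rcases lt_or_gt_of_ne h2 with c2 | c2
    · -- R < t < 2R
      have hd : HasDerivAt (fun s => (s - R)/R * Real.sqrt s)
          ((1/R) * Real.sqrt t + (t - R)/R * (1/(2*Real.sqrt t))) t :=
        (((hasDerivAt_id t).sub_const R).div_const R).mul (Real.hasDerivAt_sqrt ht.ne')
      have hev : testFn R k =ᶠ[nhds t] (fun s => (s - R)/R * Real.sqrt s) := by
        filter_upwards [Ioo_mem_nhds c1 c2] with s hs
        simp [testFn, cutoff, not_le.2 hs.1, hs.2.le]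
      refine (hd.congr_of_eventuallyEq hev).congr_deriv ?_
      rw [gfun, chiD, cutoff, if_neg (not_le.2 c1), if_neg (not_le.2 c1),
        if_pos c2.le, if_pos c2.le]
      ring
    · rcases lt_or_gt_of_ne h3 with c3 | c3
      · -- 2R < t < kR
        have hd : HasDerivAt (fun s => Real.sqrt s) (1/(2*Real.sqrt t)) t :=
          Real.hasDerivAt_sqrt ht.ne'
        have hev : testFn R k =ᶠ[nhds t] (fun s => Real.sqrt s) := by
          filter_upwards [Ioo_mem_nhds c2 c3] with s hs
          have h1' : ¬ s ≤ R := by push_neg; linarith [hs.1]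
          simp [testFn, cutoff, h1', not_le.2 hs.1, hs.2.le]
        refine (hd.congr_of_eventuallyEq hev).congr_deriv ?_
        have h1' : ¬ t ≤ R := by push_neg; linarith
        rw [gfun, chiD, cutoff, if_neg h1', if_neg h1', if_neg (not_le.2 c2),
          if_neg (not_le.2 c2), if_pos c3.le, if_pos c3.le]
        ring
      · rcases lt_or_gt_of_ne h4 with c4 | c4
        · -- kR < t < 2kR
          have hd : HasDerivAt (fun s => -(s - 2*k*R)/(k*R) * Real.sqrt s)
              ((-1/(k*R)) * Real.sqrt t + (-(t - 2*k*R)/(k*R)) * (1/(2*Real.sqrt t))) t := by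
            have h0 : HasDerivAt (fun s : ℝ => -(s - 2*k*R)/(k*R)) (-1/(k*R)) t :=
              (((hasDerivAt_id t).sub_const (2*k*R)).neg).div_const (k*R)
            exact h0.mul (Real.hasDerivAt_sqrt ht.ne')
          have hev : testFn R k =ᶠ[nhds t] (fun s => -(s - 2*k*R)/(k*R) * Real.sqrt s) := by
            filter_upwards [Ioo_mem_nhds c3 c4] with s hs
            have h1' : ¬ s ≤ R := by push_neg; linarith [hs.1]
            have h2' : ¬ s ≤ 2*R := by push_neg; linarith [hs.1]
            simp [testFn, cutoff, h1', h2', not_le.2 hs.1, hs.2.le]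
          refine (hd.congr_of_eventuallyEq hev).congr_deriv ?_
          have h1' : ¬ t ≤ R := by push_neg; linarith
          have h2' : ¬ t ≤ 2*R := by push_neg; linarith
          rw [gfun, chiD, cutoff, if_neg h1', if_neg h1', if_neg h2', if_neg h2',
            if_neg (not_le.2 c3), if_neg (not_le.2 c3), if_pos c4.le, if_pos c4.le]
          ring
        · -- 2kR < t
          have hev : testFn R k =ᶠ[nhds t] (fun _ => (0:ℝ)) := by
            filter_upwards [Ioi_mem_nhds c4] with s hs
            have h1' : ¬ s ≤ R := by push_neg; nlinarith [mem_Ioi.1 hs]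
            have h2' : ¬ s ≤ 2*R := by push_neg; nlinarith [mem_Ioi.1 hs]
            have h3' : ¬ s ≤ k*R := by push_neg; nlinarith [mem_Ioi.1 hs]
            have h4' : ¬ s ≤ 2*k*R := not_le.2 (mem_Ioi.1 hs)
            simp [testFn, cutoff, h1', h2', h3', h4']
          have : HasDerivAt (testFn R k) 0 t :=
            (hasDerivAt_const t (0:ℝ)).congr_of_eventuallyEq hev
          convert this using 1
          have h1' : ¬ t ≤ R := by push_neg; nlinarith
          have h2' : ¬ t ≤ 2*R := by push_neg; nlinarith
          have h3' : ¬ t ≤ k*R := by push_neg; nlinarith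
          have h4' : ¬ t ≤ 2*k*R := not_le.2 c4
          simp [gfun, chiD, cutoff, h1', h2', h3', h4']

lemma measurable_cutoff (R k : ℝ) : Measurable (cutoff R k) := by
  have m : ∀ c : ℝ, MeasurableSet {t : ℝ | t ≤ c} := fun c => measurableSet_Iic
  unfold cutoff
  exact Measurable.ite (m R) measurable_const <| Measurable.ite (m (2*R))
    ((measurable_id.sub_const R).div_const R) <| Measurable.ite (m (k*R)) measurable_const <|
    Measurable.ite (m (2*k*R)) ((measurable_id.sub_const (2*k*R)).neg.div_const (k*R))
    measurable_const

lemma measurable_chiD (R k : ℝ) : Measurable (chiD R k) := by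
  have m : ∀ c : ℝ, MeasurableSet {t : ℝ | t ≤ c} := fun c => measurableSet_Iic
  unfold chiD
  exact Measurable.ite (m R) measurable_const <| Measurable.ite (m (2*R)) measurable_const <|
    Measurable.ite (m (k*R)) measurable_const <|
    Measurable.ite (m (2*k*R)) measurable_const measurable_const

lemma measurable_gfun (R k : ℝ) : Measurable (gfun R k) := by
  unfold gfun
  exact ((measurable_chiD R k).mul Real.continuous_sqrt.measurable).add
    ((measurable_cutoff R k).div (measurable_const.mul Real.continuous_sqrt.measurable))

set_option maxHeartbeats 1000000 in
/-- Energy estimate for the test function: if `V(t) ≤ −(1+δ)/(4t²)` for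
`t ≥ R̃`, `R ≥ R̃` and `k > 2`, then
`∫_0^∞ (|φ'|² + Vφ²) dt ≤ 3 − (δ/4) log(k/2)`; in particular the integral is
negative once `k > 2 exp(12/δ)`. -/
theorem test_function_energy_estimate (δ Rt R k : ℝ) (hδ : 0 < δ) (hRt : 0 < Rt)
    (hRRt : Rt ≤ R) (hk : 2 < k)
    (V : ℝ → ℝ) (hV : ContinuousOn V (Set.Ioi 0))
    (hVle : ∀ t, Rt ≤ t → V t ≤ -(1 + δ) / (4 * t ^ 2)) :
    (∫ t in Ioi (0:ℝ),
        ((deriv (testFn R k) t) ^ 2 + V t * (testFn R k t) ^ 2)) ≤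
      3 - δ / 4 * Real.log (k / 2) ∧
    (2 * Real.exp (12 / δ) < k →
      (∫ t in Ioi (0:ℝ),
          ((deriv (testFn R k) t) ^ 2 + V t * (testFn R k t) ^ 2)) < 0) := by
  have hR : 0 < R := lt_of_lt_of_le hRt hRRt
  have hkR : 0 < k * R := by nlinarith
  have h2RkR : 2*R < k*R := by nlinarith
  have h2kR : (0:ℝ) < 2*k*R := by nlinarith
  have hkR2kR : k*R < 2*k*R := by nlinarith
  have hR2R : R < 2*R := by linarith
  have hsub : Icc R (2*k*R) ⊆ Ioi (0:ℝ) := fun x hx => lt_of_lt_of_le hR hx.1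
  have hIooSub : Ioo (2*R) (k*R) ⊆ Icc R (2*k*R) := fun x hx =>
    ⟨by linarith [hx.1], by nlinarith [hx.2]⟩
  set μ := volume.restrict (Ioi (0:ℝ)) with hμ
  set G : ℝ → ℝ := fun t => (gfun R k t)^2 + V t * (testFn R k t)^2 with hGdef
  have hmem : ∀ᵐ t ∂μ, t ∈ Ioi (0:ℝ) := ae_restrict_mem measurableSet_Ioi
  have hS : ∀ᵐ t ∂μ, t ∉ ({R, 2*R, k*R, 2*k*R} : Set ℝ) := by
    refine ae_restrict_of_ae ?_
    have hz : volume ({R, 2*R, k*R, 2*k*R} : Set ℝ) = 0 := (Set.toFinite _).measure_zero _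
    exact measure_eq_zero_iff_ae_notMem.1 hz
  have hfG : (fun t => (deriv (testFn R k) t)^2 + V t * (testFn R k t)^2) =ᶠ[ae μ] G := by
    filter_upwards [hS, hmem] with t htS ht
    simp only [mem_insert_iff, mem_singleton_iff, not_or] at htS
    obtain ⟨e1, e2, e3, e4⟩ := htS
    have hd := (hasDeriv_testFn R k hR hk (mem_Ioi.1 ht) e1 e2 e3 e4).deriv
    simp only [hGdef, hd]
  -- bound for V on the compact support
  obtain ⟨C, hC⟩ := isCompact_Icc.exists_bound_of_continuousOn (hV.mono hsub)
  have hC0 : 0 ≤ C := le_trans (norm_nonneg _) (hC R (left_mem_Icc.2 (by nlinarith)))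
  set M1 : ℝ := 1/R * Real.sqrt (2*k*R) + 1/(2*Real.sqrt R) with hM1
  set MG : ℝ := M1^2 + C * (2*k*R) with hMG
  set MF : ℝ := (1/R)^2*(2*k*R) + 1/R + δ/(4*R) with hMF
  have hfin : μ (Icc R (2*k*R)) < ⊤ := by
    rw [hμ, Measure.restrict_apply measurableSet_Icc]
    exact lt_of_le_of_lt (measure_mono inter_subset_left) measure_Icc_lt_top
  have hindMG : Integrable ((Icc R (2*k*R)).indicator (fun _ => MG)) μ :=
    (integrable_indicator_iff measurableSet_Icc).2 (integrableOn_const hfin.ne)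
  have hindMF : Integrable ((Icc R (2*k*R)).indicator (fun _ => MF)) μ :=
    (integrable_indicator_iff measurableSet_Icc).2 (integrableOn_const hfin.ne)
  -- integrability of G
  have hmeasG : AEStronglyMeasurable G μ := by
    have m1 : Measurable (fun t => (gfun R k t)^2) := (measurable_gfun R k).pow_const 2
    have m2 : AEMeasurable V μ := hV.aemeasurable measurableSet_Ioi
    have m3 : Measurable (fun t => (testFn R k t)^2) :=
      ((measurable_cutoff R k).mul Real.continuous_sqrt.measurable).pow_const 2
    exact (m1.aemeasurable.add (m2.mul m3.aemeasurable)).aestronglyMeasurable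
  have hboundG : ∀ᵐ t ∂μ, ‖G t‖ ≤ (Icc R (2*k*R)).indicator (fun _ => MG) t := by
    filter_upwards [hmem] with t ht
    by_cases hmemI : t ∈ Icc R (2*k*R)
    · rw [Set.indicator_of_mem hmemI]
      have ht0 : 0 < t := lt_of_lt_of_le hR hmemI.1
      have hst : 0 < Real.sqrt t := Real.sqrt_pos.2 ht0
      have hsR : 0 < Real.sqrt R := Real.sqrt_pos.2 hR
      have hsRt : Real.sqrt R ≤ Real.sqrt t := Real.sqrt_le_sqrt hmemI.1
      have h1 : |gfun R k t| ≤ M1 := by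
        rw [gfun]
        calc |chiD R k t * Real.sqrt t + cutoff R k t / (2*Real.sqrt t)|
            ≤ |chiD R k t * Real.sqrt t| + |cutoff R k t / (2*Real.sqrt t)| := abs_add_le _ _
          _ = |chiD R k t| * Real.sqrt t + |cutoff R k t| / (2*Real.sqrt t) := by
              rw [abs_mul, abs_div, abs_of_nonneg (Real.sqrt_nonneg t),
                abs_of_nonneg (by positivity : (0:ℝ) ≤ 2*Real.sqrt t)]
          _ ≤ 1/R * Real.sqrt (2*k*R) + 1/(2*Real.sqrt R) :=
              add_le_add
                (mul_le_mul (chiD_abs_le hR hk t) (Real.sqrt_le_sqrt hmemI.2)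
                  (Real.sqrt_nonneg t) (by positivity))
                (div_le_div₀ (by norm_num) (cutoff_abs_le_one hR hk t) (by positivity)
                  (by linarith))
      have hcsq : cutoff R k t ^ 2 ≤ 1 := by
        have h' := abs_le.1 (cutoff_abs_le_one hR hk t)
        nlinarith [h'.1, h'.2]
      have hphi : (testFn R k t)^2 ≤ 2*k*R := by
        rw [testFn, mul_pow, Real.sq_sqrt ht0.le]
        nlinarith [hmemI.2, ht0.le]
      have hgsq : (gfun R k t)^2 ≤ M1^2 := by
        nlinarith [sq_abs (gfun R k t), abs_nonneg (gfun R k t)]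
      calc ‖G t‖ ≤ |(gfun R k t)^2| + |V t * (testFn R k t)^2| := by
            rw [hGdef]; exact abs_add_le _ _
        _ = (gfun R k t)^2 + |V t| * (testFn R k t)^2 := by
            rw [abs_of_nonneg (sq_nonneg (gfun R k t)), abs_mul,
              abs_of_nonneg (sq_nonneg (testFn R k t))]
        _ ≤ M1^2 + C * (2*k*R) :=
            add_le_add hgsq (mul_le_mul (hC t hmemI) hphi (sq_nonneg _) hC0)
    · rw [Set.indicator_of_notMem hmemI]
      obtain ⟨hc0, hd0⟩ := cutoff_chiD_zero hR hk hmemI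
      have hGz : G t = 0 := by
        rw [hGdef]; simp [gfun, testFn, hc0, hd0]
      simp [hGz]
  have hintG : Integrable G μ := hindMG.mono' hmeasG hboundG
  -- integrability of F2
  have hmeasF : AEStronglyMeasurable (F2 δ R k) μ := by
    have m1 : Measurable (F2 δ R k) := by
      unfold F2
      exact (((measurable_chiD R k).pow_const 2).mul measurable_id).add
        ((measurable_cutoff R k).mul (measurable_chiD R k)) |>.sub
        ((measurable_const.div (measurable_id.const_mul 4)).indicator measurableSet_Ioo)
    exact m1.aestronglyMeasurable
  have hboundF : ∀ᵐ t ∂μ, ‖F2 δ R k t‖ ≤ (Icc R (2*k*R)).indicator (fun _ => MF) t := by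
    filter_upwards [hmem] with t ht
    by_cases hmemI : t ∈ Icc R (2*k*R)
    · rw [Set.indicator_of_mem hmemI]
      have ht0 : 0 < t := lt_of_lt_of_le hR hmemI.1
      have f1 : chiD R k t ^ 2 ≤ (1/R)^2 := by
        have h' := abs_le.1 (chiD_abs_le hR hk t)
        nlinarith [h'.1, h'.2]
      have f2 : |cutoff R k t * chiD R k t| ≤ 1/R := by
        rw [abs_mul]
        calc |cutoff R k t| * |chiD R k t| ≤ 1 * (1/R) :=
            mul_le_mul (cutoff_abs_le_one hR hk t) (chiD_abs_le hR hk t)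
              (abs_nonneg _) zero_le_one
          _ = 1/R := one_mul _
      have f3 : |(Ioo (2*R) (k*R)).indicator (fun s => δ / (4 * s)) t| ≤ δ/(4*R) := by
        by_cases hm : t ∈ Ioo (2*R) (k*R)
        · rw [Set.indicator_of_mem hm]
          rw [abs_of_nonneg (by positivity : (0:ℝ) ≤ δ/(4*t))]
          exact div_le_div_of_nonneg_left hδ.le (by linarith : (0:ℝ) < 4*R)
            (by linarith [hm.1])
        · rw [Set.indicator_of_notMem hm, abs_zero]; positivity
      have f4 : |chiD R k t ^ 2 * t| ≤ (1/R)^2 * (2*k*R) := by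
        rw [abs_mul, abs_of_nonneg (sq_nonneg _), abs_of_nonneg ht0.le]
        exact mul_le_mul f1 hmemI.2 ht0.le (by positivity)
      calc ‖F2 δ R k t‖
          ≤ |chiD R k t ^ 2 * t + cutoff R k t * chiD R k t|
            + |(Ioo (2*R) (k*R)).indicator (fun s => δ / (4 * s)) t| := abs_sub _ _
        _ ≤ (|chiD R k t ^ 2 * t| + |cutoff R k t * chiD R k t|)
            + |(Ioo (2*R) (k*R)).indicator (fun s => δ / (4 * s)) t| :=
            add_le_add_left (abs_add_le _ _) _
        _ ≤ MF := by rw [hMF]; exact add_le_add (add_le_add f4 f2) f3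
    · rw [Set.indicator_of_notMem hmemI]
      obtain ⟨hc0, hd0⟩ := cutoff_chiD_zero hR hk hmemI
      have hFz : F2 δ R k t = 0 := by
        rw [F2, hc0, hd0, Set.indicator_of_notMem (fun hm => hmemI (hIooSub hm))]
        ring
      simp [hFz]
  have hintF : Integrable (F2 δ R k) μ := hindMF.mono' hmeasF hboundF
  -- the main inequality between integrals
  have hle1 : (∫ t in Ioi (0:ℝ), ((deriv (testFn R k) t)^2 + V t * (testFn R k t)^2))
      ≤ ∫ t in Ioi (0:ℝ), F2 δ R k t := by
    refine integral_mono_ae (hintG.congr hfG.symm) hintF ?_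
    filter_upwards [hfG, hmem] with t hfg ht
    rw [hfg]
    exact pointwise_bound δ Rt R k hδ hRt hRRt hk V hVle (mem_Ioi.1 ht)
  -- compute ∫ F2
  have hion : IntegrableOn (F2 δ R k) (Ioi (0:ℝ)) volume := hintF
  have hi5 : IntegrableOn (F2 δ R k) (Ioi (2*k*R)) volume :=
    hion.mono_set (fun x hx => lt_trans h2kR hx)
  have hi14 : IntegrableOn (F2 δ R k) (Ioc 0 (2*k*R)) volume :=
    hion.mono_set Ioc_subset_Ioi_self
  have hp1 : (∫ t in Ioc (0:ℝ) R, F2 δ R k t) = 0 := by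
    rw [setIntegral_congr_fun measurableSet_Ioc (g := fun _ => (0:ℝ)) ?_]
    · simp
    · intro t htm
      rw [F2, chiD, cutoff, if_pos htm.2, if_pos htm.2,
        Set.indicator_of_notMem (by rw [mem_Ioo]; rintro ⟨h,_⟩; linarith [htm.2])]
      ring
  have hp2 : (∫ t in Ioc R (2*R), F2 δ R k t) = 2 := by
    rw [setIntegral_congr_fun measurableSet_Ioc (g := fun t => (2*t - R)/R^2) ?_]
    · rw [← intervalIntegral.integral_of_le hR2R.le]
      rw [intervalIntegral.integral_eq_sub_of_hasDerivAt
        (f := fun t => (t^2 - R*t)/R^2) ?_ ?_]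
      · field_simp; ring
      · intro x _
        have h := ((hasDerivAt_pow 2 x).sub ((hasDerivAt_id x).const_mul R)).div_const (R^2)
        exact h.congr_deriv (by norm_num)
      · exact (Continuous.intervalIntegrable (by fun_prop) _ _)
    · intro t htm
      rw [F2, chiD, cutoff, if_neg (not_le.2 htm.1), if_neg (not_le.2 htm.1),
        if_pos htm.2, if_pos htm.2,
        Set.indicator_of_notMem (by rw [mem_Ioo]; rintro ⟨h,_⟩; linarith [htm.2])]
      field_simp; ring
  have hp3 : (∫ t in Ioc (2*R) (k*R), F2 δ R k t) = -(δ/4) * Real.log (k/2) := by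
    rw [integral_Ioc_eq_integral_Ioo,
      setIntegral_congr_fun measurableSet_Ioo (g := fun t => -(δ/4) * (1/t)) ?_]
    · rw [← integral_Ioc_eq_integral_Ioo, ← intervalIntegral.integral_of_le h2RkR.le,
        intervalIntegral.integral_const_mul,
        integral_one_div
          (by simpa using notMem_uIcc_of_lt (by linarith) (by linarith) : (0:ℝ) ∉ uIcc (2*R) (k*R))]
      rw [show k*R/(2*R) = k/2 by field_simp]
    · intro t htm
      have h1' : ¬ t ≤ R := by push_neg; linarith [htm.1]
      have h2' : ¬ t ≤ 2*R := not_le.2 htm.1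
      rw [F2, chiD, cutoff, if_neg h1', if_neg h1', if_neg h2', if_neg h2',
        if_pos htm.2.le, if_pos htm.2.le, Set.indicator_of_mem htm]
      have ht0 : (0:ℝ) < t := by linarith [htm.1]
      field_simp
      ring
  have hp4 : (∫ t in Ioc (k*R) (2*k*R), F2 δ R k t) = 1 := by
    rw [setIntegral_congr_fun measurableSet_Ioc (g := fun t => (2*t - 2*(k*R))/(k*R)^2) ?_]
    · rw [← intervalIntegral.integral_of_le hkR2kR.le]
      rw [intervalIntegral.integral_eq_sub_of_hasDerivAt
        (f := fun t => (t^2 - 2*(k*R)*t)/(k*R)^2) ?_ ?_]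
      · field_simp; ring
      · intro x _
        have h := ((hasDerivAt_pow 2 x).sub ((hasDerivAt_id x).const_mul (2*(k*R)))).div_const ((k*R)^2)
        exact h.congr_deriv (by norm_num)
      · exact (Continuous.intervalIntegrable (by fun_prop) _ _)
    · intro t htm
      have h1' : ¬ t ≤ R := by push_neg; nlinarith [htm.1]
      have h2' : ¬ t ≤ 2*R := by push_neg; nlinarith [htm.1]
      have h3' : ¬ t ≤ k*R := not_le.2 htm.1
      have h4' : t ≤ 2*k*R := htm.2
      rw [F2, chiD, cutoff, if_neg h1', if_neg h1', if_neg h2', if_neg h2',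
        if_neg h3', if_neg h3', if_pos h4', if_pos h4',
        Set.indicator_of_notMem (by rw [mem_Ioo]; rintro ⟨_,h⟩; linarith [htm.1])]
      field_simp; ring
  have hp5 : (∫ t in Ioi (2*k*R), F2 δ R k t) = 0 := by
    rw [setIntegral_congr_fun measurableSet_Ioi (g := fun _ => (0:ℝ)) ?_]
    · simp
    · intro t htm
      have htm' : 2*k*R < t := htm
      have h1' : ¬ t ≤ R := by push_neg; nlinarith
      have h2' : ¬ t ≤ 2*R := by push_neg; nlinarith
      have h3' : ¬ t ≤ k*R := by push_neg; nlinarith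
      have h4' : ¬ t ≤ 2*k*R := not_le.2 htm'
      rw [F2, chiD, cutoff, if_neg h1', if_neg h1', if_neg h2', if_neg h2',
        if_neg h3', if_neg h3', if_neg h4', if_neg h4',
        Set.indicator_of_notMem (by rw [mem_Ioo]; rintro ⟨h,hh⟩; nlinarith)]
      ring
  have hval : (∫ t in Ioi (0:ℝ), F2 δ R k t) = 3 - δ/4 * Real.log (k/2) := by
    rw [← Ioc_union_Ioi_eq_Ioi h2kR.le,
      setIntegral_union (Ioc_disjoint_Ioi le_rfl) measurableSet_Ioi hi14 hi5]
    rw [← Ioc_union_Ioc_eq_Ioc (le_of_lt hkR) (le_of_lt hkR2kR),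
      setIntegral_union (Ioc_disjoint_Ioc_of_le le_rfl) measurableSet_Ioc
        (hi14.mono_set (Ioc_subset_Ioc le_rfl hkR2kR.le))
        (hi14.mono_set (Ioc_subset_Ioc hkR.le le_rfl))]
    rw [← Ioc_union_Ioc_eq_Ioc (by linarith : (0:ℝ) ≤ 2*R) h2RkR.le,
      setIntegral_union (Ioc_disjoint_Ioc_of_le le_rfl) measurableSet_Ioc
        (hi14.mono_set (Ioc_subset_Ioc le_rfl (by linarith)))
        (hi14.mono_set (Ioc_subset_Ioc (by linarith) (by linarith)))]
    rw [← Ioc_union_Ioc_eq_Ioc hR.le hR2R.le,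
      setIntegral_union (Ioc_disjoint_Ioc_of_le le_rfl) measurableSet_Ioc
        (hi14.mono_set (Ioc_subset_Ioc le_rfl (by linarith)))
        (hi14.mono_set (Ioc_subset_Ioc hR.le (by linarith)))]
    rw [hp1, hp2, hp3, hp4, hp5]
    ring
  have hle : (∫ t in Ioi (0:ℝ), ((deriv (testFn R k) t)^2 + V t * (testFn R k t)^2))
      ≤ 3 - δ/4 * Real.log (k/2) := hval ▸ hle1
  refine ⟨hle, ?_⟩
  intro hkbig
  have hk2 : (0:ℝ) < k/2 := by linarith
  have h1 : Real.exp (12/δ) < k/2 := by linarith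
  have h2 : 12/δ < Real.log (k/2) := (Real.lt_log_iff_exp_lt hk2).2 h1
  have e : δ/4 * (12/δ) = 3 := by field_simp; ring
  have h3 := mul_lt_mul_of_pos_left h2 (show (0:ℝ) < δ/4 by linarith)
  linarith
end

section
/- Under the asymptotics t(r) = √κ + δ₂/(2√κ r²) + o(r^{-2}), T(r) = √κ + δ₁/(2√κ r²) + o(r^{-2}), and Ric(∇r,∇r) = −(n−1)(κ + δ₂/r²) (lower bound), one has (1/4)(Δr)² − (1/2)|∇dr|² − (1/2)Ric(∇r,∇r) + 1/(4r²) ≥ (n−1)²κ/4 + (1 − (2n−5)δ₁ + (n²−4)δ₂)/(4r²) + o(r^{-2}); in particular if 1 − (2n−5)δ₁ + (n²−4)δ₂ > 0 this expression exceeds (n−1)²κ/4 for all sufficiently large r. -/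
open Filter Asymptotics

set_option maxHeartbeats 2000000
/-- The curvature estimate in the proof of Theorem 3.1: with
`Δr ≥ T + (n−2)t`, `|∇dr|² ≤ (n−2)T² + t²`,
`Ric(∇r,∇r) ≤ −(n−1)(κ + δ₂/r²)`, and the asymptotics
`t = √κ + δ₂/(2√κ r²) + o(r⁻²)`, `T = √κ + δ₁/(2√κ r²) + o(r⁻²)`,
one has `(1/4)(Δr)² − (1/2)|∇dr|² − (1/2)Ric + 1/(4r²)
  ≥ (n−1)²κ/4 + (1 − (2n−5)δ₁ + (n²−4)δ₂)/(4r²) + o(r⁻²)`;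
in particular if `1 − (2n−5)δ₁ + (n²−4)δ₂ > 0` the expression exceeds
`(n−1)²κ/4` for all sufficiently large `r`. -/
theorem curvature_estimate_thm31 (n : ℕ) (hn : 2 ≤ n)
    (κ δ₁ δ₂ R₀ : ℝ) (hκ : 0 < κ) (hδ : δ₂ ≤ δ₁)
    (t T e₁ e₂ lap hessSq ric : ℝ → ℝ)
    (hle : ∀ r, R₀ ≤ r → 0 ≤ t r ∧ t r ≤ T r)
    (ht : ∀ r, t r = Real.sqrt κ + δ₂ / (2 * Real.sqrt κ * r ^ 2) + e₂ r)
    (hT : ∀ r, T r = Real.sqrt κ + δ₁ / (2 * Real.sqrt κ * r ^ 2) + e₁ r)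
    (he₁ : e₁ =o[atTop] fun r : ℝ => 1 / r ^ 2)
    (he₂ : e₂ =o[atTop] fun r : ℝ => 1 / r ^ 2)
    (hlap : ∀ r, R₀ ≤ r → lap r ≥ T r + ((n : ℝ) - 2) * t r)
    (hhess : ∀ r, R₀ ≤ r → hessSq r ≤ ((n : ℝ) - 2) * (T r) ^ 2 + (t r) ^ 2)
    (hric : ∀ r, R₀ ≤ r → ric r ≤ -(((n : ℝ) - 1) * (κ + δ₂ / r ^ 2))) :
    (∃ e : ℝ → ℝ, (e =o[atTop] fun r : ℝ => 1 / r ^ 2) ∧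
      ∀ᶠ r in atTop,
        (1 / 4) * (lap r) ^ 2 - (1 / 2) * hessSq r - (1 / 2) * ric r
            + 1 / (4 * r ^ 2) ≥
          ((n : ℝ) - 1) ^ 2 * κ / 4
            + (1 - (2 * (n : ℝ) - 5) * δ₁ + ((n : ℝ) ^ 2 - 4) * δ₂) / (4 * r ^ 2)
            + e r) ∧
    (0 < 1 - (2 * (n : ℝ) - 5) * δ₁ + ((n : ℝ) ^ 2 - 4) * δ₂ →
      ∃ R₁ : ℝ, ∀ r, R₁ ≤ r →
        (1 / 4) * (lap r) ^ 2 - (1 / 2) * hessSq r - (1 / 2) * ric r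
            + 1 / (4 * r ^ 2) > ((n : ℝ) - 1) ^ 2 * κ / 4) := by
  have hs : 0 < Real.sqrt κ := Real.sqrt_pos.mpr hκ
  set s : ℝ := Real.sqrt κ with hs_def
  have hκs : s ^ 2 = κ := Real.sq_sqrt hκ.le
  set N : ℝ := (n : ℝ) with hN_def
  have hN : (2 : ℝ) ≤ N := by rw [hN_def]; exact_mod_cast hn
  set u : ℝ → ℝ := fun r => t r - s with hu_def
  set v : ℝ → ℝ := fun r => T r - s with hv_def
  -- basic asymptotics
  have hinv : Tendsto (fun r : ℝ => 1 / r ^ 2) atTop (nhds 0) := by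
    simpa [Pi.inv_def] using (tendsto_pow_atTop (two_ne_zero)).inv_tendsto_atTop
  have hinv_o1 : (fun r : ℝ => 1 / r ^ 2) =o[atTop] (fun _ : ℝ => (1 : ℝ)) :=
    (isLittleO_one_iff ℝ).mpr (by simpa using hinv)
  have hu_eq : u = fun r => δ₂ / (2 * s) * (1 / r ^ 2) + e₂ r := by
    funext r; simp only [hu_def, ht r]; ring
  have hv_eq : v = fun r => δ₁ / (2 * s) * (1 / r ^ 2) + e₁ r := by
    funext r; simp only [hv_def, hT r]; ring
  have hu_O : u =O[atTop] fun r : ℝ => 1 / r ^ 2 := by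
    rw [hu_eq]
    exact ((isBigO_refl (fun r : ℝ => 1 / r ^ 2) atTop).const_mul_left _).add he₂.isBigO
  have hv_O : v =O[atTop] fun r : ℝ => 1 / r ^ 2 := by
    rw [hv_eq]
    exact ((isBigO_refl (fun r : ℝ => 1 / r ^ 2) atTop).const_mul_left _).add he₁.isBigO
  have hu_o1 : u =o[atTop] (fun _ : ℝ => (1 : ℝ)) := hu_O.trans_isLittleO hinv_o1
  have hv_o1 : v =o[atTop] (fun _ : ℝ => (1 : ℝ)) := hv_O.trans_isLittleO hinv_o1
  have huv : (fun r => u r * v r) =o[atTop] fun r : ℝ => 1 / r ^ 2 := by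
    have := hu_O.mul_isLittleO hv_o1
    simpa using this
  have huu : (fun r => u r * u r) =o[atTop] fun r : ℝ => 1 / r ^ 2 := by
    have := hu_O.mul_isLittleO hu_o1
    simpa using this
  have hvv : (fun r => v r * v r) =o[atTop] fun r : ℝ => 1 / r ^ 2 := by
    have := hv_O.mul_isLittleO hv_o1
    simpa using this
  -- the error term
  set e : ℝ → ℝ := fun r =>
    s * (3 - N) / 2 * e₁ r + s * (N * (N - 3)) / 2 * e₂ r
      + (1 / 4 - (N - 2) / 2) * (v r * v r) + (N - 2) / 2 * (u r * v r)
      + ((N - 2) ^ 2 / 4 - 1 / 2) * (u r * u r) with he_def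
  have he_o : e =o[atTop] fun r : ℝ => 1 / r ^ 2 := by
    apply IsLittleO.add; apply IsLittleO.add; apply IsLittleO.add; apply IsLittleO.add
    · exact he₁.const_mul_left _
    · exact he₂.const_mul_left _
    · exact hvv.const_mul_left _
    · exact huv.const_mul_left _
    · exact huu.const_mul_left _
  -- the key pointwise inequality
  have key : ∀ r, max R₀ 1 ≤ r →
      (1 / 4) * (lap r) ^ 2 - (1 / 2) * hessSq r - (1 / 2) * ric r + 1 / (4 * r ^ 2) ≥
        (N - 1) ^ 2 * κ / 4
          + (1 - (2 * N - 5) * δ₁ + (N ^ 2 - 4) * δ₂) / (4 * r ^ 2) + e r := by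
    intro r hr
    have hr0 : (1 : ℝ) ≤ r := le_trans (le_max_right _ _) hr
    have hrR : R₀ ≤ r := le_trans (le_max_left _ _) hr
    have hr2 : (0 : ℝ) < r ^ 2 := by positivity
    obtain ⟨htpos, htT⟩ := hle r hrR
    have h1 : lap r ≥ T r + (N - 2) * t r := hlap r hrR
    have h2 : hessSq r ≤ (N - 2) * (T r) ^ 2 + (t r) ^ 2 := hhess r hrR
    have h3 : ric r ≤ -((N - 1) * (κ + δ₂ / r ^ 2)) := hric r hrR
    have hTt0 : 0 ≤ T r + (N - 2) * t r := by nlinarith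
    have hlapsq : (lap r) ^ 2 ≥ (T r + (N - 2) * t r) ^ 2 := by nlinarith
    -- the exact algebraic identity
    have hid : (1 / 4) * (T r + (N - 2) * t r) ^ 2
        - (1 / 2) * ((N - 2) * (T r) ^ 2 + (t r) ^ 2)
        + (1 / 2) * ((N - 1) * (κ + δ₂ / r ^ 2)) + 1 / (4 * r ^ 2)
        = (N - 1) ^ 2 * κ / 4
          + (1 + (3 - N) * δ₁ + (N - 2) * (N + 1) * δ₂) / (4 * r ^ 2) + e r := by
      have ht' := ht r
      have hT' := hT r
      rw [he_def]
      simp only [hu_def, hv_def, ht', hT', ← hκs]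
      field_simp
      ring
    have hC : (1 + (3 - N) * δ₁ + (N - 2) * (N + 1) * δ₂) / (4 * r ^ 2)
        ≥ (1 - (2 * N - 5) * δ₁ + (N ^ 2 - 4) * δ₂) / (4 * r ^ 2) := by
      apply div_le_div_of_nonneg_right ?_ (by positivity) |>.ge
      · nlinarith
    nlinarith [hid, hC, hlapsq, h2, h3, hr2]
  refine ⟨⟨e, he_o, ?_⟩, ?_⟩
  · filter_upwards [eventually_ge_atTop (max R₀ 1)] with r hr using key r hr
  · intro hC
    -- eventually |e r| ≤ (C/8) * (1/r²)
    have hsmall : ∀ᶠ r in atTop, ‖e r‖ ≤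
        ((1 - (2 * N - 5) * δ₁ + (N ^ 2 - 4) * δ₂) / 8) * ‖(1 : ℝ) / r ^ 2‖ :=
      he_o.bound (by linarith)
    rw [eventually_atTop] at hsmall
    obtain ⟨R₂, hR₂⟩ := hsmall
    refine ⟨max (max R₀ 1) R₂, fun r hr => ?_⟩
    have hr1 : max R₀ 1 ≤ r := le_trans (le_max_left _ _) hr
    have hr2 : R₂ ≤ r := le_trans (le_max_right _ _) hr
    have hrpos : (0 : ℝ) < r := lt_of_lt_of_le (by norm_num) (le_trans (le_max_right R₀ 1) hr1)
    have hr2pos : (0 : ℝ) < r ^ 2 := by positivity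
    have h1 := key r hr1
    have h2 := hR₂ r hr2
    rw [Real.norm_eq_abs, Real.norm_eq_abs, abs_of_pos (by positivity : (0:ℝ) < 1 / r ^ 2)] at h2
    have habs : -((1 - (2 * N - 5) * δ₁ + (N ^ 2 - 4) * δ₂) / 8 * (1 / r ^ 2)) ≤ e r :=
      neg_le_of_abs_le h2
    have hpos : (0 : ℝ) < (1 - (2 * N - 5) * δ₁ + (N ^ 2 - 4) * δ₂) / (4 * r ^ 2) + e r := by
      have : (1 - (2 * N - 5) * δ₁ + (N ^ 2 - 4) * δ₂) / (4 * r ^ 2)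
          = (1 - (2 * N - 5) * δ₁ + (N ^ 2 - 4) * δ₂) / 4 * (1 / r ^ 2) := by ring
      rw [this]
      nlinarith [mul_pos (div_pos hC (by norm_num : (0:ℝ) < 8)) (one_div_pos.mpr hr2pos)]
    linarith
end
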